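/- Let n ≥ 1 and let Z ⊂ ℝⁿ be an open convex set satisfying B_r(x̄) ⊆ Z ⊆ B_R(x̄) for some 0 < r ≤ R and x̄ ∈ ℝⁿ. Let u : Z → ℝ be convex and K-Lipschitz, and suppose there exist constants C, ϱ > 0 and α ∈ (0,1] such that for every x ∈ Z there exists a subgradient p_x ∈ ∂u(x) with u(z) − u(x) − p_x·(z−x) ≤ C|z−x|^{1+α} for all z ∈ Z ∩ B_ϱ(x). Then u is differentiable at every point of Z and its gradient ∇u is α-Hölder continuous on Z, with Hölder constant bounded by a quantity C̄ depending only on r, R, K, C, ϱ (and α, n). -/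

import Mathlib

open RealInnerProductSpace Metric Asymptotics Filter

set_option maxHeartbeats 1000000

section Aux

variable {E : Type*} [NormedAddCommGroup E] [InnerProductSpace ℝ E]

lemma hasGradientAt_of_bounds [CompleteSpace E] {Z : Set E} (hZ : IsOpen Z) {u : E → ℝ} {x p : E} {C ϱ α : ℝ}
    (hx : x ∈ Z) (hϱ : 0 < ϱ) (hC : 0 < C) (hα : 0 < α)
    (hlow : ∀ z ∈ Z, u x + ⟪p, z - x⟫ ≤ u z)
    (hup : ∀ z ∈ Z ∩ ball x ϱ, u z - u x - ⟪p, z - x⟫ ≤ C * ‖z - x‖ ^ (1 + α)) :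
    HasGradientAt u p x := by
  rw [hasGradientAt_iff_hasFDerivAt, hasFDerivAt_iff_isLittleO_nhds_zero,
    Asymptotics.isLittleO_iff]
  intro c hc
  set δ := min ϱ ((c / C) ^ (1/α)) with hδdef
  have hδpos : 0 < δ := lt_min hϱ (Real.rpow_pos_of_pos (div_pos hc hC) _)
  have hmem : ∀ᶠ h in nhds (0:E), x + h ∈ Z ∩ ball x δ := by
    have h1 : Z ∩ ball x δ ∈ nhds x :=
      Filter.inter_mem (hZ.mem_nhds hx) (ball_mem_nhds x hδpos)
    have h2 : ContinuousAt (fun h : E => x + h) 0 := by fun_prop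
    have := h2.preimage_mem_nhds (show Z ∩ ball x δ ∈ nhds ((fun h : E => x + h) 0) by
      simpa using h1)
    exact this
  filter_upwards [hmem] with h hz
  have hzZ : x + h ∈ Z := hz.1
  have hzb : ‖h‖ < δ := by simpa [dist_eq_norm] using hz.2
  simp only [InnerProductSpace.toDual_apply_apply]
  have hsub : x + h - x = h := by abel
  have herr0 : 0 ≤ u (x + h) - u x - ⟪p, h⟫ := by
    have := hlow (x + h) hzZ; rw [hsub] at this; linarith
  have herr1 : u (x + h) - u x - ⟪p, h⟫ ≤ C * ‖h‖ ^ (1 + α) := by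
    have := hup (x + h) ⟨hzZ, by
      simpa [mem_ball, dist_eq_norm, hsub] using hzb.trans_le (min_le_left _ _)⟩
    rwa [hsub] at this
  rw [Real.norm_of_nonneg herr0]
  rcases eq_or_ne h 0 with rfl | hne
  · simp
  · have ht : (0:ℝ) < ‖h‖ := norm_pos_iff.2 hne
    have key : C * ‖h‖ ^ (1 + α) ≤ c * ‖h‖ := by
      have h1 : ‖h‖ ^ (1 + α) = ‖h‖ * ‖h‖ ^ α := by
        rw [Real.rpow_add ht, Real.rpow_one]
      have h2 : ‖h‖ ^ α ≤ ((c / C) ^ (1/α)) ^ α :=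
        Real.rpow_le_rpow (le_of_lt ht) (le_of_lt (hzb.trans_le (min_le_right _ _))) hα.le
      have h3 : ((c / C) ^ (1/α)) ^ α = c / C := by
        rw [← Real.rpow_mul (le_of_lt (div_pos hc hC)), one_div,
          inv_mul_cancel₀ (ne_of_gt hα), Real.rpow_one]
      have hCC : C * ‖h‖ ^ α ≤ c := by
        calc C * ‖h‖ ^ α ≤ C * (c / C) := by
              rw [← h3]; exact mul_le_mul_of_nonneg_left h2 hC.le
          _ = c := by field_simp
      calc C * ‖h‖ ^ (1 + α) = (C * ‖h‖ ^ α) * ‖h‖ := by rw [h1]; ring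
        _ ≤ c * ‖h‖ := mul_le_mul_of_nonneg_right hCC ht.le
    linarith

lemma subgrad_norm_le {Z : Set E} (hZ : IsOpen Z) {u : E → ℝ} {x p : E} {K : NNReal}
    (hx : x ∈ Z) (hu : LipschitzOnWith K u Z)
    (hlow : ∀ z ∈ Z, u x + ⟪p, z - x⟫ ≤ u z) : ‖p‖ ≤ K := by
  rcases eq_or_ne p 0 with rfl | hp
  · simp
  · obtain ⟨ε, hε, hball⟩ := Metric.isOpen_iff.1 hZ x hx
    set t : ℝ := ε / (2 * ‖p‖) with htdef
    have hpn : (0:ℝ) < ‖p‖ := norm_pos_iff.2 hp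
    have ht : 0 < t := div_pos hε (by positivity)
    have hz : x + t • p ∈ Z := by
      apply hball
      rw [mem_ball, dist_eq_norm]
      have : ‖x + t • p - x‖ = t * ‖p‖ := by
        rw [add_sub_cancel_left, norm_smul, Real.norm_of_nonneg ht.le]
      rw [this, htdef]
      rw [div_mul_eq_mul_div, mul_comm]
      rw [mul_div_assoc]
      calc ‖p‖ * (ε / (2 * ‖p‖)) = ε / 2 := by field_simp
        _ < ε := by linarith
    have h1 := hlow _ hz
    rw [add_sub_cancel_left] at h1
    have h2 : u (x + t • p) - u x ≤ K * (t * ‖p‖) := by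
      have := hu.dist_le_mul (x + t • p) hz x hx
      have hd : dist (x + t • p) x = t * ‖p‖ := by
        rw [dist_eq_norm, add_sub_cancel_left, norm_smul, Real.norm_of_nonneg ht.le]
      rw [hd] at this
      calc u (x + t • p) - u x ≤ |u (x + t • p) - u x| := le_abs_self _
        _ = dist (u (x + t • p)) (u x) := (Real.dist_eq _ _).symm
        _ ≤ K * (t * ‖p‖) := this
    have h3 : ⟪p, t • p⟫ = t * ‖p‖ ^ 2 := by
      rw [inner_smul_right, real_inner_self_eq_norm_sq]
    have h4 : t * ‖p‖ ^ 2 ≤ K * (t * ‖p‖) := by rw [← h3]; linarith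
    have h5 : ‖p‖ ^ 2 ≤ K * ‖p‖ := by
      have := (mul_le_mul_iff_right₀ ht).1 (by linarith [h4] : t * ‖p‖ ^ 2 ≤ t * (K * ‖p‖))
      linarith
    nlinarith

lemma ball_shift {Z : Set E} (hconv : Convex ℝ Z) {xbar : E} {r : ℝ}
    (hball : ball xbar r ⊆ Z) {y : E} (hy : y ∈ Z) {s : ℝ} (hs : 0 < s) (hs1 : s ≤ 1) :
    ball (y + s • (xbar - y)) (s * r) ⊆ Z := by
  intro z hz
  set w : E := xbar + s⁻¹ • (z - (y + s • (xbar - y))) with hwdef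
  have hw : w ∈ ball xbar r := by
    rw [mem_ball, dist_eq_norm, hwdef, add_sub_cancel_left, norm_smul,
      Real.norm_of_nonneg (inv_nonneg.2 hs.le)]
    rw [mem_ball, dist_eq_norm] at hz
    rw [inv_mul_lt_iff₀ hs]
    linarith [hz]
  have hwZ : w ∈ Z := hball hw
  have hzeq : z = (1 - s) • y + s • w := by
    rw [hwdef, smul_add, smul_smul, mul_inv_cancel₀ hs.ne', one_smul]
    module
  rw [hzeq]
  exact hconv hy hwZ (by linarith) hs.le (by ring)

lemma subgrad_diff_bound {Z : Set E} {u : E → ℝ} {x y px py : E} {C ϱ α t : ℝ}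
    (hC : 0 < C) (hα : 0 < α)
    (hx : x ∈ Z) (hy : y ∈ Z)
    (hpx : ∀ z ∈ Z, u x + ⟪px, z - x⟫ ≤ u z)
    (hpxup : ∀ z ∈ Z ∩ ball x ϱ, u z - u x - ⟪px, z - x⟫ ≤ C * ‖z - x‖ ^ (1 + α))
    (hpyup : ∀ z ∈ Z ∩ ball y ϱ, u z - u y - ⟪py, z - y⟫ ≤ C * ‖z - y‖ ^ (1 + α))
    (hyx : ‖y - x‖ < ϱ)
    (ht : 0 < t) (htϱ : t < ϱ) (hball : ball y t ⊆ Z) :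
    ‖px - py‖ ≤ (2 * C / t) * ‖x - y‖ ^ (1 + α) + C * (t / 2) ^ α := by
  set q : E := px - py with hqdef
  rcases eq_or_ne q 0 with hq0 | hq
  · rw [hq0, norm_zero]
    positivity
  · have hqn : (0:ℝ) < ‖q‖ := norm_pos_iff.2 hq
    set z : E := y + (t / (2 * ‖q‖)) • q with hzdef
    have hzy : z - y = (t / (2 * ‖q‖)) • q := by rw [hzdef]; abel
    have hzynorm : ‖z - y‖ = t / 2 := by
      rw [hzy, norm_smul, Real.norm_of_nonneg (by positivity)]
      field_simp
    have hzb : z ∈ ball y t := by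
      rw [mem_ball, dist_eq_norm, hzynorm]; linarith
    have hzZ : z ∈ Z := hball hzb
    have h1 := hpx z hzZ
    have h2 := hpyup z ⟨hzZ, by rw [mem_ball, dist_eq_norm, hzynorm]; linarith⟩
    have h3 := hpxup y ⟨hy, by rwa [mem_ball, dist_eq_norm]⟩
    rw [hzynorm] at h2
    have hinner : ⟪q, z - y⟫ = (t / 2) * ‖q‖ := by
      rw [hzy, inner_smul_right, real_inner_self_eq_norm_sq]
      field_simp
    have hsplit : ⟪px, z - x⟫ = ⟪px, z - y⟫ + ⟪px, y - x⟫ := by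
      rw [← inner_add_right]
      congr 1
      abel
    have hq2 : ⟪q, z - y⟫ = ⟪px, z - y⟫ - ⟪py, z - y⟫ := by
      rw [hqdef, inner_sub_left]
    have hsum : (t / 2) * ‖q‖ ≤ C * ‖y - x‖ ^ (1 + α) + C * (t / 2) ^ (1 + α) := by
      rw [← hinner, hq2]
      rw [hsplit] at h1
      linarith
    have hpow : (t / 2 : ℝ) ^ (1 + α) = (t / 2) * (t / 2) ^ α := by
      rw [Real.rpow_add (by positivity), Real.rpow_one]
    rw [norm_sub_rev x y]
    rw [hpow] at hsum
    rw [div_mul_eq_mul_div, ← sub_nonneg]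
    have ht2 : (0:ℝ) < t / 2 := by linarith
    have := sub_nonneg.2 hsum
    calc (0:ℝ) ≤ (C * ‖y - x‖ ^ (1 + α) + C * ((t/2) * (t/2) ^ α) - (t / 2) * ‖q‖) / (t/2) :=
          div_nonneg this ht2.le
      _ = 2 * C * ‖y - x‖ ^ (1 + α) / t + C * (t / 2) ^ α - ‖q‖ := by
          field_simp

end Aux

/-- The subdifferential of `u` at `x`, relative to the set `Z`. -/
def subgrad {n : ℕ} (Z : Set (EuclideanSpace ℝ (Fin n)))
    (u : EuclideanSpace ℝ (Fin n) → ℝ) (x : EuclideanSpace ℝ (Fin n)) :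
    Set (EuclideanSpace ℝ (Fin n)) :=
  {p | ∀ z ∈ Z, u x + ⟪p, z - x⟫ ≤ u z}

/-- **`C^{1,α}` criterion for convex functions** (Lemma 2.4, Figalli's Lemma A.32):
if a convex `K`-Lipschitz function on an open convex set `Z` with
`B_r(x̄) ⊆ Z ⊆ B_R(x̄)` separates from its supporting planes in a `C^{1,α}` fashion,
then it is differentiable everywhere on `Z` and its gradient is `α`-Hölder on `Z`,
with a constant `C̄` depending only on `r, R, K, C, ϱ` (and `α, n`). -/
theorem convex_C1alpha_criterion (n : ℕ) (hn : 1 ≤ n)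
    (r R : ℝ) (K : NNReal) (C ϱ α : ℝ)
    (hr : 0 < r) (hrR : r ≤ R) (hC : 0 < C) (hϱ : 0 < ϱ) (hα : α ∈ Set.Ioc (0:ℝ) 1) :
    ∃ Cbar : ℝ, ∀ (Z : Set (EuclideanSpace ℝ (Fin n))) (xbar : EuclideanSpace ℝ (Fin n))
      (u : EuclideanSpace ℝ (Fin n) → ℝ),
      IsOpen Z → Convex ℝ Z → ball xbar r ⊆ Z → Z ⊆ ball xbar R →
      ConvexOn ℝ Z u → LipschitzOnWith K u Z →
      (∀ x ∈ Z, ∃ p ∈ subgrad Z u x,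
        ∀ z ∈ Z ∩ ball x ϱ, u z - u x - ⟪p, z - x⟫ ≤ C * ‖z - x‖ ^ (1 + α)) →
      (∀ x ∈ Z, DifferentiableAt ℝ u x) ∧
        ∀ x ∈ Z, ∀ y ∈ Z, ‖gradient u x - gradient u y‖ ≤ Cbar * ‖x - y‖ ^ α := by
  obtain ⟨hα0, hα1⟩ := hα
  have hR : 0 < R := lt_of_lt_of_le hr hrR
  set d₀ : ℝ := min r (ϱ * r / (2 * R)) with hd₀def
  clear_value d₀
  have hd₀ : 0 < d₀ := hd₀def ▸ lt_min hr (by positivity)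
  have hd₀r : d₀ ≤ r := hd₀def ▸ min_le_left _ _
  have hd₀ϱ : d₀ ≤ ϱ * r / (2 * R) := hd₀def ▸ min_le_right _ _
  set M : ℝ := 2 * C * (R / r) ^ (1 + α) + C with hMdef
  clear_value M
  have hRr1 : (1:ℝ) ≤ (R / r) ^ (1 + α) :=
    Real.one_le_rpow ((le_div_iff₀ hr).2 (by linarith)) (by linarith)
  have hM : 0 < M := by rw [hMdef]; positivity
  have hd₀α : (0:ℝ) < d₀ ^ α := Real.rpow_pos_of_pos hd₀ α
  have hK0 : (0:ℝ) ≤ 2 * K / d₀ ^ α := div_nonneg (by positivity) hd₀α.le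
  refine ⟨3 * M + 2 * K / d₀ ^ α, ?_⟩
  intro Z xbar u hZopen hZconv hrZ hZR hconvu hlip hsep
  choose p hpsub hpup using hsep
  have hplow : ∀ x (hx : x ∈ Z), ∀ z ∈ Z, u x + ⟪p x hx, z - x⟫ ≤ u z :=
    fun x hx => hpsub x hx
  have hgradAt : ∀ x (hx : x ∈ Z), HasGradientAt u (p x hx) x := fun x hx =>
    hasGradientAt_of_bounds hZopen hx hϱ hC hα0 (hplow x hx) (hpup x hx)
  refine ⟨fun x hx => ((hgradAt x hx).hasFDerivAt).differentiableAt, ?_⟩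
  intro x hx y hy
  rw [(hgradAt x hx).gradient, (hgradAt y hy).gradient]
  set d : ℝ := ‖x - y‖ with hddef
  clear_value d
  rcases eq_or_lt_of_le (hddef ▸ norm_nonneg (x - y) : (0:ℝ) ≤ d) with hd0 | hd
  · have hxy : x - y = 0 := norm_eq_zero.1 (hddef.symm.trans hd0.symm)
    obtain rfl : x = y := sub_eq_zero.1 hxy
    have hpeq : p x hx = p x hy := rfl
    rw [hpeq, sub_self, norm_zero]
    exact mul_nonneg (by linarith) (Real.rpow_nonneg hd0.le _)
  · -- d > 0
    have hdα : (0:ℝ) < d ^ α := Real.rpow_pos_of_pos hd α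
    rcases lt_or_ge d d₀ with hsmall | hbig
    · -- small case
      set s : ℝ := d / r with hsdef
      clear_value s
      have hs : 0 < s := hsdef ▸ div_pos hd hr
      have hs1 : s < 1 := by
        rw [hsdef, div_lt_one hr]; linarith
      have hsr : s * r = d := by rw [hsdef]; exact div_mul_cancel₀ d hr.ne'
      have hsR : s * R < ϱ / 2 := by
        have hdϱR : d < ϱ * r / (2 * R) := lt_of_lt_of_le hsmall hd₀ϱ
        rw [lt_div_iff₀ (by positivity : (0:ℝ) < 2 * R)] at hdϱR
        rw [hsdef, div_mul_eq_mul_div, div_lt_iff₀ hr]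
        nlinarith
      have hdsR : d ≤ s * R := by
        rw [hsdef, div_mul_eq_mul_div, le_div_iff₀ hr]
        nlinarith
      have hdϱ : d < ϱ := by linarith
      set xs := x + s • (xbar - x) with hxsdef
      set ys := y + s • (xbar - y) with hysdef
      clear_value xs ys
      have hballx : ball xs (s * r) ⊆ Z := hxsdef ▸ ball_shift hZconv hrZ hx hs hs1.le
      have hbally : ball ys (s * r) ⊆ Z := hysdef ▸ ball_shift hZconv hrZ hy hs hs1.le
      have hxsZ : xs ∈ Z := hballx (mem_ball_self (mul_pos hs hr))
      have hysZ : ys ∈ Z := hbally (mem_ball_self (mul_pos hs hr))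
      have hxbarR : ∀ w ∈ Z, ‖xbar - w‖ ≤ R := by
        intro w hw
        have := hZR hw
        rw [mem_ball, dist_eq_norm] at this
        rw [norm_sub_rev]
        linarith
      have hxxs : ‖xs - x‖ ≤ s * R := by
        rw [hxsdef, add_sub_cancel_left, norm_smul, Real.norm_of_nonneg hs.le]
        nlinarith [hxbarR x hx, norm_nonneg (xbar - x)]
      have hyys : ‖ys - y‖ ≤ s * R := by
        rw [hysdef, add_sub_cancel_left, norm_smul, Real.norm_of_nonneg hs.le]
        nlinarith [hxbarR y hy, norm_nonneg (xbar - y)]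
      have hxsys : ‖ys - xs‖ ≤ d := by
        have heq : ys - xs = (1 - s) • (y - x) := by rw [hysdef, hxsdef]; module
        rw [heq, norm_smul, Real.norm_of_nonneg (by linarith), norm_sub_rev y x, ← hddef]
        nlinarith
      have hRr0 : (1:ℝ) ≤ R / r := (le_div_iff₀ hr).2 (by linarith)
      have hsRd : s * R ≤ R / r * d := by
        rw [hsdef]
        rw [div_mul_eq_mul_div, div_mul_eq_mul_div, mul_comm]
      -- generic per-step estimate
      have bound_step : ∀ L : ℝ, 0 ≤ L → L ≤ R / r * d →
          (2 * C / d) * L ^ (1 + α) + C * (d / 2) ^ α ≤ M * d ^ α := by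
        intro L hL0 hL
        have h1 : L ^ (1 + α) ≤ (R / r * d) ^ (1 + α) :=
          Real.rpow_le_rpow hL0 hL (by linarith)
        have h2 : (R / r * d) ^ (1 + α) = (R / r) ^ (1 + α) * (d * d ^ α) := by
          rw [Real.mul_rpow (by positivity) hd.le, Real.rpow_add hd, Real.rpow_one]
        have h3 : (2 * C / d) * L ^ (1 + α) ≤ 2 * C * (R / r) ^ (1 + α) * d ^ α := by
          calc (2 * C / d) * L ^ (1 + α) ≤ (2 * C / d) * ((R / r) ^ (1 + α) * (d * d ^ α)) := by
                rw [← h2]; exact mul_le_mul_of_nonneg_left h1 (by positivity)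
            _ = 2 * C * (R / r) ^ (1 + α) * d ^ α := by field_simp
        have h4 : C * (d / 2) ^ α ≤ C * d ^ α :=
          mul_le_mul_of_nonneg_left (Real.rpow_le_rpow (by linarith) (by linarith) hα0.le) hC.le
        rw [hMdef]
        nlinarith
      have hballxd : ball xs d ⊆ Z := by rw [← hsr]; exact hballx
      have hballyd : ball ys d ⊆ Z := by rw [← hsr]; exact hbally
      have stepA : ‖p x hx - p xs hxsZ‖ ≤ M * d ^ α := by
        have h := subgrad_diff_bound hC hα0 hx hxsZ (hplow x hx) (hpup x hx) (hpup xs hxsZ)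
          (lt_of_le_of_lt hxxs (by linarith)) hd hdϱ hballxd
        refine le_trans h (bound_step ‖x - xs‖ (norm_nonneg _) ?_)
        rw [norm_sub_rev]
        linarith
      have stepB : ‖p y hy - p ys hysZ‖ ≤ M * d ^ α := by
        have h := subgrad_diff_bound hC hα0 hy hysZ (hplow y hy) (hpup y hy) (hpup ys hysZ)
          (lt_of_le_of_lt hyys (by linarith)) hd hdϱ hballyd
        refine le_trans h (bound_step ‖y - ys‖ (norm_nonneg _) ?_)
        rw [norm_sub_rev]
        linarith
      have stepC : ‖p xs hxsZ - p ys hysZ‖ ≤ M * d ^ α := by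
        have h := subgrad_diff_bound hC hα0 hxsZ hysZ (hplow xs hxsZ) (hpup xs hxsZ)
          (hpup ys hysZ) (lt_of_le_of_lt hxsys hdϱ) hd hdϱ hballyd
        refine le_trans h (bound_step ‖xs - ys‖ (norm_nonneg _) ?_)
        rw [norm_sub_rev]
        nlinarith
      have htri : ‖p x hx - p y hy‖ ≤
          ‖p x hx - p xs hxsZ‖ + ‖p xs hxsZ - p ys hysZ‖ + ‖p ys hysZ - p y hy‖ := by
        have t1 : ‖p x hx - p y hy‖ ≤ ‖p x hx - p xs hxsZ‖ + ‖p xs hxsZ - p y hy‖ :=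
          norm_sub_le_norm_sub_add_norm_sub _ _ _
        have t2 : ‖p xs hxsZ - p y hy‖ ≤ ‖p xs hxsZ - p ys hysZ‖ + ‖p ys hysZ - p y hy‖ :=
          norm_sub_le_norm_sub_add_norm_sub _ _ _
        linarith
      have hBrev : ‖p ys hysZ - p y hy‖ = ‖p y hy - p ys hysZ‖ := norm_sub_rev _ _
      calc ‖p x hx - p y hy‖ ≤ 3 * (M * d ^ α) := by rw [hBrev] at htri; linarith
        _ ≤ (3 * M + 2 * K / d₀ ^ α) * d ^ α := by nlinarith [mul_nonneg hK0 hdα.le]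
    · -- large case
      have h1 : ‖p x hx‖ ≤ K := subgrad_norm_le hZopen hx hlip (hplow x hx)
      have h2 : ‖p y hy‖ ≤ K := subgrad_norm_le hZopen hy hlip (hplow y hy)
      have h3 : ‖p x hx - p y hy‖ ≤ 2 * K := le_trans (norm_sub_le _ _) (by linarith)
      have h4 : d₀ ^ α ≤ d ^ α := Real.rpow_le_rpow hd₀.le hbig hα0.le
      have h5 : (2 * K : ℝ) ≤ 2 * K / d₀ ^ α * d ^ α := by
        rw [div_mul_eq_mul_div, le_div_iff₀ hd₀α]
        have hK0' : (0:ℝ) ≤ 2 * K := by positivity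
        nlinarith
      calc ‖p x hx - p y hy‖ ≤ 2 * K / d₀ ^ α * d ^ α := le_trans h3 h5
        _ ≤ (3 * M + 2 * K / d₀ ^ α) * d ^ α := by nlinarith [mul_pos hM hdα]
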